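/- Let 𝒫 ⊂ ℤ^d be a finite set that spans ℝ^d (i.e. 𝒫 is not contained in any linear hyperplane of ℝ^d), and let a_i > 0 for each i ∈ 𝒫. Define P : (0,∞)^d → ℝ by P(z) = Σ_{i∈𝒫} a_i z_1^{i_1}⋯z_d^{i_d}. Then: (a) every critical point of P on (0,∞)^d (a point where all first partial derivatives of P vanish) is a global minimum of P on (0,∞)^d; (b) P has at most one critical point on (0,∞)^d; (c) P attains a global minimum on (0,∞)^d if and only if 𝒫 is not contained in any closed halfspace {x ∈ ℝ^d : ⟨x, c⟩ ≤ 0} for a nonzero c ∈ ℝ^d. -/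

import Mathlib

open Finset

set_option maxHeartbeats 1000000


private lemma prod_zpow_exp {d : ℕ} (i : Fin d → ℤ) (z : Fin d → ℝ) (hz : ∀ k, 0 < z k) :
    (∏ k : Fin d, z k ^ (i k)) = Real.exp (∑ k : Fin d, (i k : ℝ) * Real.log (z k)) := by
  rw [Real.exp_sum]
  exact Finset.prod_congr rfl fun k _ => by
    rw [← Real.rpow_intCast (z k) (i k), Real.rpow_def_of_pos (hz k), mul_comm]

private lemma span_orth_zero {d : ℕ} (P : Finset (Fin d → ℤ))
    (hspan : Submodule.span ℝ ((fun i : Fin d → ℤ => fun k => (i k : ℝ)) '' ↑P) = ⊤)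
    (v : Fin d → ℝ) (hv : ∀ i ∈ P, ∑ k : Fin d, (i k : ℝ) * v k = 0) : v = 0 := by
  let L : (Fin d → ℝ) →ₗ[ℝ] ℝ :=
    { toFun := fun w => ∑ k, w k * v k
      map_add' := fun x y => by simp [add_mul, Finset.sum_add_distrib]
      map_smul' := fun c x => by simp [Finset.mul_sum, mul_assoc] }
  have hker : Submodule.span ℝ ((fun i : Fin d → ℤ => fun k => (i k : ℝ)) '' ↑P)
      ≤ LinearMap.ker L := by
    rw [Submodule.span_le]
    rintro _ ⟨i, hi, rfl⟩
    simpa [L] using hv i hi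
  have hv2 : v ∈ LinearMap.ker L := by
    apply hker
    rw [hspan]
    trivial
  have hk : ∑ k, v k * v k = 0 := hv2
  funext k
  have := (Finset.sum_eq_zero_iff_of_nonneg (fun k _ => mul_self_nonneg (v k))).mp hk k (mem_univ k)
  simpa using mul_self_eq_zero.mp this

private lemma crit_sum {d : ℕ} (P : Finset (Fin d → ℤ)) (a : (Fin d → ℤ) → ℝ)
    (f : (Fin d → ℝ) → ℝ)
    (hf : ∀ z, f z = ∑ i ∈ P, a i * ∏ k : Fin d, z k ^ (i k))
    (z : Fin d → ℝ) (hz : ∀ k, 0 < z k) (m : Fin d)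
    (hc : deriv (fun s : ℝ => f (Function.update z m s)) (z m) = 0) :
    ∑ i ∈ P, a i * (i m : ℝ) * ∏ k : Fin d, z k ^ (i k) = 0 := by
  have hzm : z m ≠ 0 := (hz m).ne'
  set C : (Fin d → ℤ) → ℝ := fun i => ∏ k ∈ Finset.univ.erase m, z k ^ (i k) with hC
  have hfun : (fun s : ℝ => f (Function.update z m s))
      = fun s => ∑ i ∈ P, a i * (s ^ (i m) * C i) := by
    funext s
    rw [hf]
    refine Finset.sum_congr rfl fun i _ => ?_
    congr 1
    rw [← Finset.mul_prod_erase Finset.univ _ (Finset.mem_univ m), Function.update_self]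
    congr 1
    exact Finset.prod_congr rfl fun k hk => by
      rw [Function.update_of_ne (Finset.ne_of_mem_erase hk)]
  have hD : HasDerivAt (fun s : ℝ => ∑ i ∈ P, a i * (s ^ (i m) * C i))
      (∑ i ∈ P, a i * ((i m : ℝ) * (z m) ^ (i m - 1) * C i)) (z m) := by
    refine HasDerivAt.fun_sum fun i _ => ?_
    have h1 : HasDerivAt (fun s : ℝ => s ^ (i m)) ((i m : ℝ) * (z m) ^ (i m - 1)) (z m) :=
      hasDerivAt_zpow (i m) (z m) (Or.inl hzm)
    have h2 := (h1.mul_const (C i)).const_mul (a i)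
    simpa [mul_assoc] using h2
  have hD0 : ∑ i ∈ P, a i * ((i m : ℝ) * (z m) ^ (i m - 1) * C i) = 0 := by
    rw [hfun] at hc
    rwa [hD.deriv] at hc
  calc ∑ i ∈ P, a i * (i m : ℝ) * ∏ k, z k ^ (i k)
      = z m * ∑ i ∈ P, a i * ((i m : ℝ) * (z m) ^ (i m - 1) * C i) := by
        rw [Finset.mul_sum]
        refine Finset.sum_congr rfl fun i _ => ?_
        rw [← Finset.mul_prod_erase Finset.univ _ (Finset.mem_univ m)]
        have hz2 : z m ^ (i m) = z m ^ (i m - 1) * z m := by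
          rw [← zpow_add_one₀ hzm]
          congr 1
          ring
        rw [hz2]
        ring
    _ = 0 := by rw [hD0, mul_zero]
private lemma main_ineq {d : ℕ} (P : Finset (Fin d → ℤ)) (a : (Fin d → ℤ) → ℝ)
    (ha : ∀ i ∈ P, 0 < a i)
    (f : (Fin d → ℝ) → ℝ)
    (hf : ∀ z, f z = ∑ i ∈ P, a i * ∏ k : Fin d, z k ^ (i k))
    (z y : Fin d → ℝ) (hz : ∀ k, 0 < z k) (hy : ∀ k, 0 < y k)
    (hS : ∀ m, ∑ i ∈ P, a i * (i m : ℝ) * ∏ k : Fin d, z k ^ (i k) = 0) :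
    f z ≤ f y ∧ (f y ≤ f z → ∀ i ∈ P,
      (∑ k : Fin d, (i k : ℝ) * (Real.log (y k) - Real.log (z k))) = 0) := by
  have hcpos : ∀ i ∈ P, 0 < a i * ∏ k : Fin d, z k ^ (i k) := fun i hi =>
    mul_pos (ha i hi) (Finset.prod_pos fun k _ => zpow_pos (hz k) _)
  have hfz : f z = ∑ i ∈ P, a i * ∏ k : Fin d, z k ^ (i k) := hf z
  have hfy : f y = ∑ i ∈ P, (a i * ∏ k : Fin d, z k ^ (i k)) *
      Real.exp (∑ k : Fin d, (i k : ℝ) * (Real.log (y k) - Real.log (z k))) := by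
    rw [hf]
    refine Finset.sum_congr rfl fun i _ => ?_
    rw [prod_zpow_exp i y hy, prod_zpow_exp i z hz, mul_assoc, ← Real.exp_add]
    congr 2
    rw [← Finset.sum_add_distrib]
    exact Finset.sum_congr rfl fun k _ => by ring
  have hbsum : ∑ i ∈ P, (a i * ∏ k : Fin d, z k ^ (i k)) *
      (∑ k : Fin d, (i k : ℝ) * (Real.log (y k) - Real.log (z k))) = 0 := by
    have h1 : ∀ i ∈ P, (a i * ∏ k : Fin d, z k ^ (i k)) *
        (∑ k : Fin d, (i k : ℝ) * (Real.log (y k) - Real.log (z k)))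
        = ∑ k : Fin d, ((Real.log (y k) - Real.log (z k)) *
            (a i * (i k : ℝ) * ∏ j : Fin d, z j ^ (i j))) := by
      intro i _
      rw [Finset.mul_sum]
      exact Finset.sum_congr rfl fun k _ => by ring
    rw [Finset.sum_congr rfl h1, Finset.sum_comm]
    refine Finset.sum_eq_zero fun k _ => ?_
    rw [← Finset.mul_sum, hS k, mul_zero]
  have key : f y - f z = ∑ i ∈ P, (a i * ∏ k : Fin d, z k ^ (i k)) *
      (Real.exp (∑ k : Fin d, (i k : ℝ) * (Real.log (y k) - Real.log (z k))) - 1 -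
        (∑ k : Fin d, (i k : ℝ) * (Real.log (y k) - Real.log (z k)))) := by
    rw [hfy, hfz]
    rw [show (∑ i ∈ P, (a i * ∏ k : Fin d, z k ^ (i k)) *
        Real.exp (∑ k : Fin d, (i k : ℝ) * (Real.log (y k) - Real.log (z k))))
        - ∑ i ∈ P, a i * ∏ k : Fin d, z k ^ (i k)
      = ((∑ i ∈ P, (a i * ∏ k : Fin d, z k ^ (i k)) *
        Real.exp (∑ k : Fin d, (i k : ℝ) * (Real.log (y k) - Real.log (z k))))
        - ∑ i ∈ P, a i * ∏ k : Fin d, z k ^ (i k))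
        - ∑ i ∈ P, (a i * ∏ k : Fin d, z k ^ (i k)) *
            (∑ k : Fin d, (i k : ℝ) * (Real.log (y k) - Real.log (z k))) by rw [hbsum]; ring]
    rw [← Finset.sum_sub_distrib, ← Finset.sum_sub_distrib]
    exact Finset.sum_congr rfl fun i _ => by ring
  have hterm : ∀ i ∈ P, 0 ≤ (a i * ∏ k : Fin d, z k ^ (i k)) *
      (Real.exp (∑ k : Fin d, (i k : ℝ) * (Real.log (y k) - Real.log (z k))) - 1 -
        (∑ k : Fin d, (i k : ℝ) * (Real.log (y k) - Real.log (z k)))) := fun i hi =>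
    mul_nonneg (hcpos i hi).le
      (by nlinarith [Real.add_one_le_exp (∑ k : Fin d, (i k : ℝ) * (Real.log (y k) - Real.log (z k)))])
  constructor
  · nlinarith [Finset.sum_nonneg hterm, key]
  · intro hle i hi
    have hsum0 : ∑ i ∈ P, (a i * ∏ k : Fin d, z k ^ (i k)) *
        (Real.exp (∑ k : Fin d, (i k : ℝ) * (Real.log (y k) - Real.log (z k))) - 1 -
          (∑ k : Fin d, (i k : ℝ) * (Real.log (y k) - Real.log (z k)))) = 0 := by
      have h2 := Finset.sum_nonneg hterm
      nlinarith [key]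
    have := (Finset.sum_eq_zero_iff_of_nonneg hterm).mp hsum0 i hi
    by_contra hb
    have hlt := Real.add_one_lt_exp hb
    have hcp := hcpos i hi
    nlinarith [this]

private lemma exists_global_min {d : ℕ} (P : Finset (Fin d → ℤ)) (a : (Fin d → ℤ) → ℝ)
    (ha : ∀ i ∈ P, 0 < a i)
    (hspan : Submodule.span ℝ ((fun i : Fin d → ℤ => fun k => (i k : ℝ)) '' ↑P) = ⊤)
    (f : (Fin d → ℝ) → ℝ)
    (hf : ∀ z, f z = ∑ i ∈ P, a i * ∏ k : Fin d, z k ^ (i k))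
    (hnc : ¬ ∃ c : Fin d → ℝ, c ≠ 0 ∧ ∀ i ∈ P, (∑ k : Fin d, (i k : ℝ) * c k) ≤ 0) :
    ∃ z : Fin d → ℝ, (∀ k, 0 < z k) ∧ ∀ y : Fin d → ℝ, (∀ k, 0 < y k) → f z ≤ f y := by
  rcases Nat.eq_zero_or_pos d with hd | hd
  · subst hd
    refine ⟨fun _ => 1, fun k => one_pos, fun y hy => ?_⟩
    rw [hf, hf]
    refine le_of_eq (Finset.sum_congr rfl fun i _ => ?_)
    simp
  · haveI : Nonempty (Fin d) := ⟨⟨0, hd⟩⟩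
    -- P is nonempty
    rcases P.eq_empty_or_nonempty with hP | hPne
    · exfalso
      rw [hP] at hspan
      simp only [Finset.coe_empty, Set.image_empty, Submodule.span_empty] at hspan
      exact absurd hspan bot_ne_top
    push_neg at hnc
    -- F u = max over i in P of <i,u>
    set F : (Fin d → ℝ) → ℝ :=
      fun x => P.sup' hPne (fun i => ∑ k : Fin d, (i k : ℝ) * x k) with hFdef
    have hFcont : Continuous F :=
      Continuous.finset_sup'_apply hPne fun i _ =>
        continuous_finset_sum _ fun k _ => continuous_const.mul (continuous_apply k)
    have hFpos : ∀ x : Fin d → ℝ, x ≠ 0 → 0 < F x := by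
      intro x hx
      obtain ⟨i, hi, hlt⟩ := hnc x hx
      exact lt_of_lt_of_le hlt (Finset.le_sup' (fun i => ∑ k : Fin d, (i k : ℝ) * x k) hi)
    -- sphere is compact and nonempty
    have hsne : (Metric.sphere (0 : Fin d → ℝ) 1).Nonempty := by
      refine ⟨fun _ => 1, ?_⟩
      rw [mem_sphere_iff_norm, sub_zero]
      simp [pi_norm_const]
    obtain ⟨u0, hu0S, hu0min⟩ := (isCompact_sphere (0 : Fin d → ℝ) 1).exists_isMinOn hsne
      hFcont.continuousOn
    have hu0ne : u0 ≠ 0 := by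
      intro h
      rw [mem_sphere_iff_norm, sub_zero, h] at hu0S
      simp at hu0S
    set δ : ℝ := F u0 with hδdef
    have hδpos : 0 < δ := hFpos u0 hu0ne
    have hFlow : ∀ x : Fin d → ℝ, δ * ‖x‖ ≤ F x := by
      intro x
      rcases eq_or_ne x 0 with rfl | hx
      · have : F 0 = 0 := by
          rw [hFdef]
          simp
        rw [this]
        simp
      · have hn : (0:ℝ) < ‖x‖ := norm_pos_iff.mpr hx
        have hu : (‖x‖⁻¹ • x) ∈ Metric.sphere (0 : Fin d → ℝ) 1 := by
          rw [mem_sphere_iff_norm, sub_zero, norm_smul]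
          simp [abs_of_nonneg (inv_nonneg.mpr (norm_nonneg x)), inv_mul_cancel₀ hn.ne']
        have h1 : δ ≤ F (‖x‖⁻¹ • x) := hu0min hu
        have h2 : F (‖x‖⁻¹ • x) ≤ ‖x‖⁻¹ * F x := by
          rw [hFdef]
          refine Finset.sup'_le _ _ fun i hi => ?_
          have he : ∑ k : Fin d, (i k : ℝ) * (‖x‖⁻¹ • x) k
              = ‖x‖⁻¹ * ∑ k : Fin d, (i k : ℝ) * x k := by
            rw [Finset.mul_sum]
            refine Finset.sum_congr rfl fun k _ => ?_
            simp only [Pi.smul_apply, smul_eq_mul]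
            ring
          rw [he]
          exact mul_le_mul_of_nonneg_left
            (Finset.le_sup' (fun i => ∑ k : Fin d, (i k : ℝ) * x k) hi)
            (inv_nonneg.mpr (norm_nonneg x))
        have h3 := h1.trans h2
        have h4 := mul_le_mul_of_nonneg_right h3 (norm_nonneg x)
        calc δ * ‖x‖ ≤ ‖x‖⁻¹ * F x * ‖x‖ := h4
          _ = F x := by field_simp
    -- the function g
    set g : (Fin d → ℝ) → ℝ :=
      fun x => ∑ i ∈ P, a i * Real.exp (∑ k : Fin d, (i k : ℝ) * x k) with hgdef
    have hg : ∀ x : Fin d → ℝ, f (fun k => Real.exp (x k)) = g x := by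
      intro x
      rw [hf, hgdef]
      refine Finset.sum_congr rfl fun i _ => ?_
      rw [prod_zpow_exp i _ (fun k => Real.exp_pos (x k))]
      simp [Real.log_exp]
    have hgcont : Continuous g := by
      refine continuous_finset_sum _ fun i _ => continuous_const.mul ?_
      exact Real.continuous_exp.comp
        (continuous_finset_sum _ fun k _ => continuous_const.mul (continuous_apply k))
    set amin : ℝ := P.inf' hPne a with hamin
    have haminpos : 0 < amin := by
      obtain ⟨i, hi, he⟩ := Finset.exists_mem_eq_inf' hPne a
      rw [hamin, he]
      exact ha i hi
    have hglow : ∀ x : Fin d → ℝ, amin * Real.exp (δ * ‖x‖) ≤ g x := by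
      intro x
      obtain ⟨i, hi, hFx⟩ := Finset.exists_mem_eq_sup' hPne
        (fun i => ∑ k : Fin d, (i k : ℝ) * x k)
      have h1 : a i * Real.exp (∑ k : Fin d, (i k : ℝ) * x k) ≤ g x := by
        show a i * Real.exp (∑ k : Fin d, (i k : ℝ) * x k)
          ≤ ∑ j ∈ P, a j * Real.exp (∑ k : Fin d, (j k : ℝ) * x k)
        exact Finset.single_le_sum
          (f := fun j => a j * Real.exp (∑ k : Fin d, (j k : ℝ) * x k))
          (fun j hj => mul_nonneg (ha j hj).le (Real.exp_pos _).le) hi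
      have h2 : amin * Real.exp (δ * ‖x‖) ≤ a i * Real.exp (∑ k : Fin d, (i k : ℝ) * x k) := by
        have hae : amin ≤ a i := Finset.inf'_le a hi
        have hee : Real.exp (δ * ‖x‖) ≤ Real.exp (∑ k : Fin d, (i k : ℝ) * x k) := by
          apply Real.exp_le_exp.mpr
          calc δ * ‖x‖ ≤ F x := hFlow x
            _ = ∑ k : Fin d, (i k : ℝ) * x k := hFx
        exact mul_le_mul hae hee (Real.exp_pos _).le (le_of_lt (haminpos.trans_le hae))
      exact h2.trans h1
    have hg0pos : 0 < g 0 :=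
      Finset.sum_pos (fun i hi => mul_pos (ha i hi) (Real.exp_pos _)) hPne
    set R : ℝ := max (Real.log (g 0 / amin) / δ) 0 with hR
    have hR0 : (0:ℝ) ≤ R := le_max_right _ _
    have h0K : (0 : Fin d → ℝ) ∈ Metric.closedBall (0 : Fin d → ℝ) R :=
      Metric.mem_closedBall_self hR0
    obtain ⟨x0, hx0K, hx0min⟩ := (isCompact_closedBall (0 : Fin d → ℝ) R).exists_isMinOn
      ⟨0, h0K⟩ hgcont.continuousOn
    have hglobal : ∀ x : Fin d → ℝ, g x0 ≤ g x := by
      intro x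
      by_cases hx : x ∈ Metric.closedBall (0 : Fin d → ℝ) R
      · exact hx0min hx
      · have hxR : R < ‖x‖ := by
          rw [Metric.mem_closedBall, dist_zero_right, not_le] at hx
          exact hx
        have h2 : Real.log (g 0 / amin) / δ < ‖x‖ := lt_of_le_of_lt (le_max_left _ _) hxR
        have h3 : Real.log (g 0 / amin) < δ * ‖x‖ := by
          rw [div_lt_iff₀ hδpos] at h2
          linarith [h2]
        have h4 : g 0 / amin < Real.exp (δ * ‖x‖) := by
          calc g 0 / amin = Real.exp (Real.log (g 0 / amin)) :=
                (Real.exp_log (div_pos hg0pos haminpos)).symm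
            _ < Real.exp (δ * ‖x‖) := Real.exp_lt_exp.mpr h3
        have h5 : g 0 < amin * Real.exp (δ * ‖x‖) := by
          rw [div_lt_iff₀' haminpos] at h4
          exact h4
        have h6 : g 0 < g x := h5.trans_le (hglow x)
        exact (hx0min h0K).trans h6.le
    refine ⟨fun k => Real.exp (x0 k), fun k => Real.exp_pos _, fun y hy => ?_⟩
    have hfy : f y = g (fun k => Real.log (y k)) := by
      rw [hf, hgdef]
      exact Finset.sum_congr rfl fun i _ => by rw [prod_zpow_exp i y hy]
    rw [hg x0, hfy]
    exact hglobal _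

theorem laurent_polynomial_positive_orthant_minimum
    (d : ℕ) (P : Finset (Fin d → ℤ)) (a : (Fin d → ℤ) → ℝ)
    -- positive coefficients
    (ha : ∀ i ∈ P, 0 < a i)
    -- P is not contained in a hyperplane of ℝ^d, i.e. it spans ℝ^d
    (hspan : Submodule.span ℝ ((fun i : Fin d → ℤ => fun k => (i k : ℝ)) '' ↑P) = ⊤)
    (f : (Fin d → ℝ) → ℝ)
    (hf : ∀ z, f z = ∑ i ∈ P, a i * ∏ k : Fin d, z k ^ (i k)) :
    -- (a) every critical point on the positive orthant is a global minimum
    ((∀ z : Fin d → ℝ, (∀ k, 0 < z k) →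
        (∀ m : Fin d, deriv (fun s : ℝ => f (Function.update z m s)) (z m) = 0) →
        ∀ y : Fin d → ℝ, (∀ k, 0 < y k) → f z ≤ f y) ∧
    -- (b) at most one critical point on the positive orthant
    (∀ z y : Fin d → ℝ, (∀ k, 0 < z k) → (∀ k, 0 < y k) →
        (∀ m : Fin d, deriv (fun s : ℝ => f (Function.update z m s)) (z m) = 0) →
        (∀ m : Fin d, deriv (fun s : ℝ => f (Function.update y m s)) (y m) = 0) →
        z = y) ∧
    -- (c) a global minimum exists iff P is not contained in a halfspace containing 0
    ((∃ z : Fin d → ℝ, (∀ k, 0 < z k) ∧ ∀ y : Fin d → ℝ, (∀ k, 0 < y k) → f z ≤ f y)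
      ↔ ¬ ∃ c : Fin d → ℝ, c ≠ 0 ∧ ∀ i ∈ P, (∑ k : Fin d, (i k : ℝ) * c k) ≤ 0)) := by
  refine ⟨?_, ?_, ?_, ?_⟩
  · -- (a)
    intro z hz hcrit y hy
    exact (main_ineq P a ha f hf z y hz hy
      (fun m => crit_sum P a f hf z hz m (hcrit m))).1
  · -- (b)
    intro z y hz hy hcz hcy
    have h1 := main_ineq P a ha f hf z y hz hy
      (fun m => crit_sum P a f hf z hz m (hcz m))
    have h2 := main_ineq P a ha f hf y z hy hz
      (fun m => crit_sum P a f hf y hy m (hcy m))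
    have hb0 := h1.2 h2.1
    have hv0 := span_orth_zero P hspan
      (fun k => Real.log (y k) - Real.log (z k)) hb0
    funext k
    have hk : Real.log (y k) - Real.log (z k) = 0 := congrFun hv0 k
    exact Real.log_injOn_pos (Set.mem_Ioi.mpr (hz k)) (Set.mem_Ioi.mpr (hy k))
      (by linarith)
  · -- (c) forward
    rintro ⟨z, hz, hmin⟩ ⟨c, hc0, hcle⟩
    have hne : ¬ ∀ i ∈ P, ∑ k : Fin d, (i k : ℝ) * c k = 0 := fun h =>
      hc0 (span_orth_zero P hspan c h)
    push_neg at hne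
    obtain ⟨i0, hi0, hne0⟩ := hne
    have hi0lt : ∑ k : Fin d, (i0 k : ℝ) * c k < 0 := lt_of_le_of_ne (hcle i0 hi0) hne0
    set y : Fin d → ℝ := fun k => z k * Real.exp (c k) with hydef
    have hy : ∀ k, 0 < y k := fun k => mul_pos (hz k) (Real.exp_pos _)
    have hterm : ∀ i : Fin d → ℤ, a i * ∏ k : Fin d, y k ^ (i k)
        = (a i * ∏ k : Fin d, z k ^ (i k)) * Real.exp (∑ k : Fin d, (i k : ℝ) * c k) := by
      intro i
      rw [prod_zpow_exp i y hy, prod_zpow_exp i z hz, mul_assoc, ← Real.exp_add]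
      congr 2
      rw [← Finset.sum_add_distrib]
      refine Finset.sum_congr rfl fun k _ => ?_
      rw [hydef]
      rw [Real.log_mul (hz k).ne' (Real.exp_pos _).ne', Real.log_exp]
      ring
    have hlt : f y < f z := by
      rw [hf, hf]
      refine Finset.sum_lt_sum (fun i hi => ?_) ⟨i0, hi0, ?_⟩
      · rw [hterm i]
        have hcp : 0 < a i * ∏ k : Fin d, z k ^ (i k) :=
          mul_pos (ha i hi) (Finset.prod_pos fun k _ => zpow_pos (hz k) _)
        have : Real.exp (∑ k : Fin d, (i k : ℝ) * c k) ≤ 1 :=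
          Real.exp_le_one_iff.mpr (hcle i hi)
        nlinarith
      · rw [hterm i0]
        have hcp : 0 < a i0 * ∏ k : Fin d, z k ^ (i0 k) :=
          mul_pos (ha i0 hi0) (Finset.prod_pos fun k _ => zpow_pos (hz k) _)
        have : Real.exp (∑ k : Fin d, (i0 k : ℝ) * c k) < 1 := by
          rw [show (1:ℝ) = Real.exp 0 by simp]
          exact Real.exp_lt_exp.mpr hi0lt
        nlinarith
    exact absurd (hmin y hy) (not_le.mpr hlt)
  · -- (c) backward
    exact fun hnc => exists_global_min P a ha hspan f hf hnc
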